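/- Let f : ℝ^{n×m} → ℝ be differentiable with ∇f Lipschitz continuous with modulus L_f (Frobenius norm), λ > 0, μ ≥ 0, and fix ρ₁, ρ₂ ∈ (0,1). Let U^{k−1}, U^k ∈ ℝ^{n×r}, V^{k−1}, V^k ∈ ℝ^{m×r}, β_k ≥ 0, and set Ũ^k = U^k + β_k(U^k − U^{k−1}), Ṽ^k = V^k + β_k(V^k − V^{k−1}). Set τ₁ = L_f‖V^k‖², choose γ₁ > τ₁, and let U^{k+1} globally minimize U ↦ ⟨∇f(Ũ^k(V^k)ᵀ)V^k, U⟩ + (γ₁/2)‖U − Ũ^k‖_F² + (μ/2)‖U‖_F² + λ‖U‖_{2,0}. Set τ₂ = L_f‖U^{k+1}‖², choose γ₂ > τ₂, and let V^{k+1} globally minimize V ↦ ⟨(∇f(U^{k+1}(Ṽ^k)ᵀ))ᵀU^{k+1}, V⟩ + (γ₂/2)‖V − Ṽ^k‖_F² + (μ/2)‖V‖_F² + λ‖V‖_{2,0}. With α₁ = γ₁ − τ₁ and α₂ = γ₂ − τ₂, it holds that [Φ_{λ,μ}(U^{k+1},V^{k+1}) + (ρ₁α₁/2)‖U^{k+1}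 − U^k‖_F² + (ρ₂α₂/2)‖V^{k+1} − V^k‖_F²] − [Φ_{λ,μ}(U^k,V^k) + (ρ₁α₁/2)‖U^k − U^{k−1}‖_F² + (ρ₂α₂/2)‖V^k − V^{k−1}‖_F²] ≤ −[ρ₁α₁/2 − (2(1−ρ₁)τ₁ + α₁)β_k²/(2(1−ρ₁))]·‖U^k − U^{k−1}‖_F² − [ρ₂α₂/2 − (2(1−ρ₂)τ₂ + α₂)β_k²/(2(1−ρ₂))]·‖V^k − V^{k−1}‖_F². -/

import Mathlib

open Filter Topology Matrix

attribute [local instance] Matrix.frobeniusSeminormedAddCommGroup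
  Matrix.frobeniusNormedAddCommGroup Matrix.frobeniusNormedSpace

/-- The Frobenius (trace) inner product `⟨A,B⟩ = trace(AᵀB) = ∑ᵢⱼ Aᵢⱼ Bᵢⱼ` on matrices. -/
noncomputable def frobInner {α β : Type*} [Fintype α] [Fintype β] (A B : Matrix α β ℝ) : ℝ :=
  ∑ i, ∑ j, A i j * B i j

/-- The Frobenius norm of a matrix. -/
noncomputable def frobNorm {α β : Type*} [Fintype α] [Fintype β] (A : Matrix α β ℝ) : ℝ :=
  Real.sqrt (frobInner A A)

/-- The column `ℓ_{2,0}`-norm: the number of nonzero columns. -/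
noncomputable def l20 {α β : Type*} [Fintype α] [Fintype β] (A : Matrix α β ℝ) : ℕ :=
  {j : β | (fun i => A i j) ≠ 0}.ncard

/-- The spectral norm of a matrix. -/
noncomputable def specNorm {m r : ℕ} (V : Matrix (Fin m) (Fin r) ℝ) : ℝ :=
  ‖LinearMap.toContinuousLinearMap (Matrix.toEuclideanLin V)‖

/-- `Φ_{λ,μ}(U,V) = f(UVᵀ) + (μ/2)(‖U‖_F² + ‖V‖_F²) + λ(‖U‖_{2,0} + ‖V‖_{2,0})`. -/
noncomputable def Phi {n m r : ℕ} (f : Matrix (Fin n) (Fin m) ℝ → ℝ) (lam mu : ℝ)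
    (U : Matrix (Fin n) (Fin r) ℝ) (V : Matrix (Fin m) (Fin r) ℝ) : ℝ :=
  f (U * Vᵀ) + mu / 2 * (frobInner U U + frobInner V V) + lam * ((l20 U : ℝ) + (l20 V : ℝ))

section helperlemmas
variable {α β : Type*} [Fintype α] [Fintype β]

lemma frobInner_self_nonneg (A : Matrix α β ℝ) : 0 ≤ frobInner A A :=
  Finset.sum_nonneg fun _ _ => Finset.sum_nonneg fun _ _ => mul_self_nonneg _
lemma frobNorm_nonneg (A : Matrix α β ℝ) : 0 ≤ frobNorm A := Real.sqrt_nonneg _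
lemma frobNorm_sq (A : Matrix α β ℝ) : frobNorm A * frobNorm A = frobInner A A :=
  Real.mul_self_sqrt (frobInner_self_nonneg A)
lemma frobInner_comm (A B : Matrix α β ℝ) : frobInner A B = frobInner B A := by
  unfold frobInner; congr 1; ext i; congr 1; ext j; ring
lemma frobInner_sub_left (A B C : Matrix α β ℝ) :
    frobInner (A - B) C = frobInner A C - frobInner B C := by
  unfold frobInner; rw [← Finset.sum_sub_distrib]
  congr 1; ext i; rw [← Finset.sum_sub_distrib]
  congr 1; ext j; simp [Matrix.sub_apply]; ring
lemma frobInner_sub_right (A B C : Matrix α β ℝ) :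
    frobInner A (B - C) = frobInner A B - frobInner A C := by
  rw [frobInner_comm, frobInner_sub_left, frobInner_comm B A, frobInner_comm C A]
lemma frobInner_smul_left (t : ℝ) (A B : Matrix α β ℝ) :
    frobInner (t • A) B = t * frobInner A B := by
  unfold frobInner; rw [Finset.mul_sum]
  congr 1; ext i; rw [Finset.mul_sum]
  congr 1; ext j; simp [Matrix.smul_apply]; ring
lemma frobInner_smul_right (t : ℝ) (A B : Matrix α β ℝ) :
    frobInner A (t • B) = t * frobInner A B := by
  rw [frobInner_comm, frobInner_smul_left, frobInner_comm]
lemma frobInner_abs_le (A B : Matrix α β ℝ) : |frobInner A B| ≤ frobNorm A * frobNorm B := by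
  have key : (frobInner A B) ^ 2 ≤ frobInner A A * frobInner B B := by
    have h := Finset.sum_mul_sq_le_sq_mul_sq Finset.univ
      (fun p : α × β => A p.1 p.2) (fun p : α × β => B p.1 p.2)
    simpa [frobInner, Fintype.sum_prod_type, pow_two, Finset.sum_mul_sum] using h
  have h1 : |frobInner A B| = Real.sqrt ((frobInner A B) ^ 2) := (Real.sqrt_sq_eq_abs _).symm
  rw [h1]
  calc Real.sqrt ((frobInner A B) ^ 2) ≤ Real.sqrt (frobInner A A * frobInner B B) :=
        Real.sqrt_le_sqrt key
    _ = frobNorm A * frobNorm B := Real.sqrt_mul (frobInner_self_nonneg A) _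
lemma frobNorm_smul (t : ℝ) (A : Matrix α β ℝ) : frobNorm (t • A) = |t| * frobNorm A := by
  unfold frobNorm
  rw [frobInner_smul_left, frobInner_smul_right, ← mul_assoc, Real.sqrt_mul (mul_self_nonneg t),
    Real.sqrt_mul_self_eq_abs]
lemma abs_entry_le_frobNorm (A : Matrix α β ℝ) (i : α) (j : β) : |A i j| ≤ frobNorm A := by
  have h : (A i j) ^ 2 ≤ frobInner A A := by
    have h0 := Finset.single_le_sum (f := fun j' => A i j' * A i j')
      (fun j' _ => mul_self_nonneg _) (Finset.mem_univ j)
    have h2 : ∑ j', A i j' * A i j' ≤ frobInner A A :=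
      Finset.single_le_sum (f := fun i' => ∑ j', A i' j' * A i' j')
        (fun i' _ => Finset.sum_nonneg fun j' _ => mul_self_nonneg _) (Finset.mem_univ i)
    nlinarith [h0, h2]
  calc |A i j| = Real.sqrt ((A i j) ^ 2) := (Real.sqrt_sq_eq_abs _).symm
    _ ≤ frobNorm A := Real.sqrt_le_sqrt h

lemma extrap_sq0 (βk : ℝ) (Ukm Uk Ut : Matrix α β ℝ) (hUt : Ut = Uk + βk • (Uk - Ukm)) :
    frobInner (Uk - Ut) (Uk - Ut) = βk ^ 2 * frobInner (Uk - Ukm) (Uk - Ukm) := by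
  have h : Uk - Ut = (-βk) • (Uk - Ukm) := by rw [hUt, neg_smul]; abel
  rw [h, frobInner_smul_left, frobInner_smul_right]; ring

lemma extrap_sq (ρ βk : ℝ) (hρ : ρ ∈ Set.Ioo (0:ℝ) 1) (hβk : 0 ≤ βk)
    (Ukm Uk Uk1 Ut : Matrix α β ℝ) (hUt : Ut = Uk + βk • (Uk - Ukm)) :
    ρ * frobInner (Uk1 - Uk) (Uk1 - Uk) ≤ frobInner (Uk1 - Ut) (Uk1 - Ut)
      + ρ / (1 - ρ) * βk ^ 2 * frobInner (Uk - Ukm) (Uk - Ukm) := by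
  obtain ⟨hρ0, hρ1⟩ := hρ
  have h1ρ : (0:ℝ) < 1 - ρ := by linarith
  set a := Uk1 - Uk with ha
  set D := Uk - Ukm with hD
  have hdec : Uk1 - Ut = a - βk • D := by rw [hUt, ha, hD]; abel
  have hq1 : frobInner (Uk1 - Ut) (Uk1 - Ut)
      = frobInner a a - 2 * βk * frobInner a D + βk ^ 2 * frobInner D D := by
    rw [hdec]
    simp only [frobInner_sub_left, frobInner_sub_right, frobInner_smul_left,
      frobInner_smul_right, frobInner_comm D a]
    ring
  set na := frobNorm a with hna
  set nd := frobNorm D with hnd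
  have hqa : frobInner a a = na * na := (frobNorm_sq a).symm
  have hqd : frobInner D D = nd * nd := (frobNorm_sq D).symm
  have hcross : frobInner a D ≤ na * nd := le_trans (le_abs_self _) (frobInner_abs_le a D)
  set c := ρ / (1 - ρ) with hc
  have hcc : c * (1 - ρ) = ρ := by rw [hc, div_mul_cancel₀ _ h1ρ.ne']
  rw [hq1, hqa, hqd]
  have hccm := congrArg (· * (βk ^ 2 * (nd * nd))) hcc
  nlinarith [sq_nonneg ((1 - ρ) * na - βk * nd), hccm, h1ρ,
    mul_nonneg (mul_nonneg hβk h1ρ.le) (sub_nonneg.2 hcross)]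

lemma scalar_step (τ γ α ρ βk : ℝ) (hγ : γ > τ) (hα : α = γ - τ)
    (hρ : ρ ∈ Set.Ioo (0:ℝ) 1) (hβk : 0 ≤ βk)
    (fY fX fT ip1 ip0 ipt muY muX q1 q0 qa qd : ℝ)
    (hA1 : fY - fT - (ip1 - ipt) ≤ τ / 2 * q1)
    (hA2 : fT + (ip0 - ipt) - fX ≤ τ / 2 * q0)
    (hopt : ip1 + γ / 2 * q1 + muY ≤ ip0 + γ / 2 * q0 + muX)
    (e1 : q0 = βk ^ 2 * qd)
    (e2 : ρ * qa ≤ q1 + ρ / (1 - ρ) * βk ^ 2 * qd) :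
    fY + muY + ρ * α / 2 * qa ≤ fX + muX + (2 * (1 - ρ) * τ + α) * βk ^ 2 / (2 * (1 - ρ)) * qd := by
  subst hα
  obtain ⟨hρ0, hρ1⟩ := hρ
  have h1ρ : (0:ℝ) < 1 - ρ := by linarith
  have step1 : fY + muY ≤ fX + muX + (τ + γ) / 2 * q0 - (γ - τ) / 2 * q1 := by linarith
  rw [e1] at step1
  have step2 : (γ - τ) / 2 * (ρ * qa) ≤ (γ - τ) / 2 * (q1 + ρ / (1 - ρ) * βk ^ 2 * qd) :=
    mul_le_mul_of_nonneg_left e2 (by linarith)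
  have hco : (τ + γ) / 2 * βk ^ 2 + (γ - τ) / 2 * (ρ / (1 - ρ) * βk ^ 2)
      = (2 * (1 - ρ) * τ + (γ - τ)) * βk ^ 2 / (2 * (1 - ρ)) := by
    field_simp
    ring
  have hco' := congrArg (· * qd) hco
  linarith [step1, step2, hco']

end helperlemmas

lemma specNorm_nonneg {m r : ℕ} (V : Matrix (Fin m) (Fin r) ℝ) : 0 ≤ specNorm V :=
  norm_nonneg _

lemma specNorm_zero_rows {r : ℕ} (V : Matrix (Fin 0) (Fin r) ℝ) : specNorm V = 0 := by
  unfold specNorm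
  have h : LinearMap.toContinuousLinearMap (Matrix.toEuclideanLin V) = 0 := by
    ext x i
    exact i.elim0
  rw [h, norm_zero]

lemma mulVec_sq_le {m r : ℕ} (M : Matrix (Fin m) (Fin r) ℝ) (x : Fin r → ℝ) :
    ∑ j, (M *ᵥ x) j ^ 2 ≤ specNorm M ^ 2 * ∑ k, x k ^ 2 := by
  set v : EuclideanSpace ℝ (Fin r) := (WithLp.equiv 2 _).symm x with hv
  have hb := (LinearMap.toContinuousLinearMap (Matrix.toEuclideanLin M)).le_opNorm v
  have hlhs : ‖LinearMap.toContinuousLinearMap (Matrix.toEuclideanLin M) v‖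
      = Real.sqrt (∑ j, (M *ᵥ x) j ^ 2) := by
    rw [EuclideanSpace.norm_eq]
    congr 1
    refine Finset.sum_congr rfl fun j _ => ?_
    have h : (LinearMap.toContinuousLinearMap (Matrix.toEuclideanLin M) v) j = (M *ᵥ x) j := by
      rfl
    rw [h, Real.norm_eq_abs, sq_abs]
  have hrhs : ‖v‖ = Real.sqrt (∑ k, x k ^ 2) := by
    rw [EuclideanSpace.norm_eq]
    congr 1
    refine Finset.sum_congr rfl fun k _ => ?_
    rw [Real.norm_eq_abs, sq_abs]
    rfl
  rw [hlhs, hrhs] at hb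
  have hs : ‖LinearMap.toContinuousLinearMap (Matrix.toEuclideanLin M)‖ = specNorm M := rfl
  rw [hs] at hb
  have hsq := mul_self_le_mul_self (Real.sqrt_nonneg (∑ j, (M *ᵥ x) j ^ 2)) hb
  have h1 : 0 ≤ ∑ j, (M *ᵥ x) j ^ 2 := Finset.sum_nonneg fun _ _ => sq_nonneg _
  have h2 : 0 ≤ ∑ k, x k ^ 2 := Finset.sum_nonneg fun _ _ => sq_nonneg _
  have e1 := Real.mul_self_sqrt h1
  have e2 := Real.mul_self_sqrt h2
  nlinarith [hsq, e1, e2]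

lemma spec_bound_right {n m r : ℕ} (A : Matrix (Fin n) (Fin r) ℝ) (B : Matrix (Fin m) (Fin r) ℝ) :
    frobInner (A * Bᵀ) (A * Bᵀ) ≤ specNorm B ^ 2 * frobInner A A := by
  have key : ∀ i, ∑ j, ((A * Bᵀ) i j) ^ 2 ≤ specNorm B ^ 2 * ∑ k, A i k ^ 2 := by
    intro i
    have h : ∀ j, (A * Bᵀ) i j = (B *ᵥ (A i)) j := by
      intro j; simp [Matrix.mul_apply, Matrix.mulVec, dotProduct, mul_comm]
    simp only [h]
    exact mulVec_sq_le B (A i)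
  calc frobInner (A * Bᵀ) (A * Bᵀ) = ∑ i, ∑ j, ((A * Bᵀ) i j) ^ 2 := by
        unfold frobInner; congr 1; ext i; congr 1; ext j; ring
    _ ≤ ∑ i, specNorm B ^ 2 * ∑ k, A i k ^ 2 := Finset.sum_le_sum fun i _ => key i
    _ = specNorm B ^ 2 * frobInner A A := by
        rw [← Finset.mul_sum]; unfold frobInner; congr 1; congr 1; ext i; congr 1; ext k; ring

lemma spec_bound_left {n m r : ℕ} (A : Matrix (Fin n) (Fin r) ℝ) (B : Matrix (Fin m) (Fin r) ℝ) :
    frobInner (A * Bᵀ) (A * Bᵀ) ≤ specNorm A ^ 2 * frobInner B B := by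
  have key : ∀ j, ∑ i, ((A * Bᵀ) i j) ^ 2 ≤ specNorm A ^ 2 * ∑ k, B j k ^ 2 := by
    intro j
    have h : ∀ i, (A * Bᵀ) i j = (A *ᵥ (B j)) i := by
      intro i; simp [Matrix.mul_apply, Matrix.mulVec, dotProduct]
    simp only [h]
    exact mulVec_sq_le A (B j)
  calc frobInner (A * Bᵀ) (A * Bᵀ) = ∑ j, ∑ i, ((A * Bᵀ) i j) ^ 2 := by
        unfold frobInner
        rw [Finset.sum_comm]
        congr 1; ext j; congr 1; ext i; ring
    _ ≤ ∑ j, specNorm A ^ 2 * ∑ k, B j k ^ 2 := Finset.sum_le_sum fun j _ => key j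
    _ = specNorm A ^ 2 * frobInner B B := by
        rw [← Finset.mul_sum]; unfold frobInner; congr 1; congr 1; ext j; congr 1; ext k; ring

lemma adj_right {n m r : ℕ} (G : Matrix (Fin n) (Fin m) ℝ) (W : Matrix (Fin n) (Fin r) ℝ)
    (B : Matrix (Fin m) (Fin r) ℝ) : frobInner G (W * Bᵀ) = frobInner (G * B) W := by
  unfold frobInner
  simp only [Matrix.mul_apply, Matrix.transpose_apply, Finset.mul_sum, Finset.sum_mul]
  congr 1; ext i
  rw [Finset.sum_comm]
  congr 1; ext j; congr 1; ext k; ring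

lemma adj_left {n m r : ℕ} (G : Matrix (Fin n) (Fin m) ℝ) (A : Matrix (Fin n) (Fin r) ℝ)
    (W : Matrix (Fin m) (Fin r) ℝ) : frobInner G (A * Wᵀ) = frobInner (Gᵀ * A) W := by
  unfold frobInner
  simp only [Matrix.mul_apply, Matrix.transpose_apply, Finset.mul_sum, Finset.sum_mul]
  rw [Finset.sum_comm]
  congr 1; ext j
  rw [Finset.sum_comm]
  congr 1; ext k; congr 1; ext i; ring

lemma descent_abs {n m : ℕ} (f : Matrix (Fin n) (Fin m) ℝ → ℝ)
    (f' : Matrix (Fin n) (Fin m) ℝ → Matrix (Fin n) (Fin m) ℝ) (Lf : ℝ)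
    (hdiff : Differentiable ℝ f)
    (hgrad : ∀ X H, fderiv ℝ f X H = frobInner (f' X) H)
    (hlip : ∀ X Y, frobNorm (f' X - f' Y) ≤ Lf * frobNorm (X - Y))
    (X W : Matrix (Fin n) (Fin m) ℝ) :
    |f (X + W) - f X - frobInner (f' X) W| ≤ Lf / 2 * frobInner W W := by
  set g : ℝ → ℝ := fun t => frobInner (f' (X + t • W)) W with hg
  have hc : ∀ t : ℝ, HasDerivAt (fun s : ℝ => X + s • W) W t := by
    intro t
    have h := ((hasDerivAt_id t).smul_const W).const_add X
    rw [one_smul] at h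
    exact h
  have hderiv : ∀ t : ℝ, HasDerivAt (fun s : ℝ => f (X + s • W)) (g t) t := by
    intro t
    have h1 := (hdiff (X + t • W)).hasFDerivAt.comp_hasDerivAt t (hc t)
    exact h1.congr_deriv (hgrad _ _)
  have hent : ∀ (i : Fin n) (j : Fin m), Continuous fun t : ℝ => f' (X + t • W) i j := by
    intro i j
    have hL : LipschitzWith (Real.toNNReal (Lf * frobNorm W))
        (fun t : ℝ => f' (X + t • W) i j) := by
      rw [lipschitzWith_iff_dist_le_mul]
      intro s t
      have h1 : |f' (X + s • W) i j - f' (X + t • W) i j|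
          ≤ frobNorm (f' (X + s • W) - f' (X + t • W)) := by
        have h := abs_entry_le_frobNorm (f' (X + s • W) - f' (X + t • W)) i j
        simpa [Matrix.sub_apply] using h
      have h2 := hlip (X + s • W) (X + t • W)
      have h3 : X + s • W - (X + t • W) = (s - t) • W := by
        rw [sub_smul]; abel
      rw [h3, frobNorm_smul] at h2
      have h4 : Lf * (|s - t| * frobNorm W) ≤ Real.toNNReal (Lf * frobNorm W) * |s - t| := by
        rw [Real.coe_toNNReal']
        have h5 : Lf * (|s - t| * frobNorm W) = (Lf * frobNorm W) * |s - t| := by ring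
        rw [h5]
        exact mul_le_mul_of_nonneg_right (le_max_left _ _) (abs_nonneg _)
      rw [Real.dist_eq, Real.dist_eq]
      linarith
    exact hL.continuous
  have hcont : Continuous g := by
    apply continuous_finset_sum
    intro i _
    apply continuous_finset_sum
    intro j _
    exact (hent i j).mul continuous_const
  have key : f (X + W) - f X = ∫ t in (0:ℝ)..1, g t := by
    have h := intervalIntegral.integral_eq_sub_of_hasDerivAt
      (f := fun s : ℝ => f (X + s • W)) (f' := g)
      (fun t _ => hderiv t) (hcont.intervalIntegrable 0 1)
    simpa using h.symm
  have hg0 : g 0 = frobInner (f' X) W := by simp [hg]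
  have key2 : f (X + W) - f X - frobInner (f' X) W = ∫ t in (0:ℝ)..1, (g t - g 0) := by
    rw [intervalIntegral.integral_sub (hcont.intervalIntegrable 0 1)
      (intervalIntegrable_const), intervalIntegral.integral_const, key, hg0]
    simp
  have bound : ∀ t ∈ Set.Icc (0:ℝ) 1, |g t - g 0| ≤ (Lf * frobInner W W) * t := by
    intro t ht
    have h1 : g t - g 0 = frobInner (f' (X + t • W) - f' X) W := by
      rw [hg0, hg, frobInner_sub_left]
    rw [h1]
    have h2 : |frobInner (f' (X + t • W) - f' X) W|
        ≤ frobNorm (f' (X + t • W) - f' X) * frobNorm W := frobInner_abs_le _ _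
    have h3 := hlip (X + t • W) X
    have h4 : X + t • W - X = t • W := by abel
    rw [h4, frobNorm_smul, abs_of_nonneg ht.1] at h3
    have h5 : frobNorm (f' (X + t • W) - f' X) * frobNorm W
        ≤ (Lf * (t * frobNorm W)) * frobNorm W :=
      mul_le_mul_of_nonneg_right h3 (frobNorm_nonneg _)
    have h6 : (Lf * (t * frobNorm W)) * frobNorm W = (Lf * frobInner W W) * t := by
      rw [← frobNorm_sq]; ring
    linarith
  rw [key2]
  have habs := intervalIntegral.abs_integral_le_integral_abs (f := fun t => g t - g 0)
    (a := (0:ℝ)) (b := 1) (μ := MeasureTheory.volume) (by norm_num)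
  have hint1 : IntervalIntegrable (fun t => |g t - g 0|) MeasureTheory.volume 0 1 :=
    ((hcont.sub continuous_const).abs).intervalIntegrable 0 1
  have hint2 : IntervalIntegrable (fun t => (Lf * frobInner W W) * t) MeasureTheory.volume 0 1 :=
    (continuous_const.mul continuous_id).intervalIntegrable 0 1
  have hmono := intervalIntegral.integral_mono_on (by norm_num : (0:ℝ) ≤ 1) hint1 hint2 bound
  have hval : (∫ t in (0:ℝ)..1, (Lf * frobInner W W) * t) = Lf / 2 * frobInner W W := by
    rw [intervalIntegral.integral_const_mul, integral_id]
    ring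
  rw [hval] at hmono
  linarith [habs, hmono]


/-- the key descent inequality for one step of the alternating
majorization-minimization method with extrapolation. -/
theorem amm_extrapolation_descent {n m r : ℕ}
    (f : Matrix (Fin n) (Fin m) ℝ → ℝ) (f' : Matrix (Fin n) (Fin m) ℝ → Matrix (Fin n) (Fin m) ℝ)
    (Lf : ℝ)
    (hdiff : Differentiable ℝ f)
    (hgrad : ∀ X H, fderiv ℝ f X H = frobInner (f' X) H)
    (hlip : ∀ X Y, frobNorm (f' X - f' Y) ≤ Lf * frobNorm (X - Y))
    (lam mu : ℝ) (hlam : 0 < lam) (hmu : 0 ≤ mu)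
    (ρ1 ρ2 : ℝ) (hρ1 : ρ1 ∈ Set.Ioo (0:ℝ) 1) (hρ2 : ρ2 ∈ Set.Ioo (0:ℝ) 1)
    (Ukm Uk Utk Uk1 : Matrix (Fin n) (Fin r) ℝ) (Vkm Vk Vtk Vk1 : Matrix (Fin m) (Fin r) ℝ)
    (βk : ℝ) (hβk : 0 ≤ βk)
    (hUt : Utk = Uk + βk • (Uk - Ukm)) (hVt : Vtk = Vk + βk • (Vk - Vkm))
    (τ1 γ1 : ℝ) (hτ1 : τ1 = Lf * specNorm Vk ^ 2) (hγ1 : γ1 > τ1)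
    (hU : ∀ U : Matrix (Fin n) (Fin r) ℝ,
      frobInner (f' (Utk * Vkᵀ) * Vk) Uk1 + γ1 / 2 * frobInner (Uk1 - Utk) (Uk1 - Utk) +
          mu / 2 * frobInner Uk1 Uk1 + lam * (l20 Uk1 : ℝ) ≤
        frobInner (f' (Utk * Vkᵀ) * Vk) U + γ1 / 2 * frobInner (U - Utk) (U - Utk) +
          mu / 2 * frobInner U U + lam * (l20 U : ℝ))
    (τ2 γ2 : ℝ) (hτ2 : τ2 = Lf * specNorm Uk1 ^ 2) (hγ2 : γ2 > τ2)
    (hV : ∀ V : Matrix (Fin m) (Fin r) ℝ,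
      frobInner ((f' (Uk1 * Vtkᵀ))ᵀ * Uk1) Vk1 + γ2 / 2 * frobInner (Vk1 - Vtk) (Vk1 - Vtk) +
          mu / 2 * frobInner Vk1 Vk1 + lam * (l20 Vk1 : ℝ) ≤
        frobInner ((f' (Uk1 * Vtkᵀ))ᵀ * Uk1) V + γ2 / 2 * frobInner (V - Vtk) (V - Vtk) +
          mu / 2 * frobInner V V + lam * (l20 V : ℝ))
    (α1 α2 : ℝ) (hα1 : α1 = γ1 - τ1) (hα2 : α2 = γ2 - τ2) :
    (Phi f lam mu Uk1 Vk1 + ρ1 * α1 / 2 * frobInner (Uk1 - Uk) (Uk1 - Uk) +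
        ρ2 * α2 / 2 * frobInner (Vk1 - Vk) (Vk1 - Vk)) -
      (Phi f lam mu Uk Vk + ρ1 * α1 / 2 * frobInner (Uk - Ukm) (Uk - Ukm) +
        ρ2 * α2 / 2 * frobInner (Vk - Vkm) (Vk - Vkm)) ≤
      -(ρ1 * α1 / 2 - (2 * (1 - ρ1) * τ1 + α1) * βk ^ 2 / (2 * (1 - ρ1))) *
          frobInner (Uk - Ukm) (Uk - Ukm) -
        (ρ2 * α2 / 2 - (2 * (1 - ρ2) * τ2 + α2) * βk ^ 2 / (2 * (1 - ρ2))) *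
          frobInner (Vk - Vkm) (Vk - Vkm) := by
  
  -- degenerate case: if Lf < 0 then n = 0 or m = 0
  have hdeg : Lf < 0 → n = 0 ∨ m = 0 := by
    intro hLf
    by_contra hcon
    push_neg at hcon
    obtain ⟨hn, hm⟩ := hcon
    set E : Matrix (Fin n) (Fin m) ℝ := Matrix.of (fun _ _ => (1:ℝ)) with hE
    have hEE : frobInner E E = (n : ℝ) * m := by
      simp [frobInner, hE]
    have hnm : (0:ℝ) < (n : ℝ) * m := by
      have h1 : 0 < n := Nat.pos_of_ne_zero hn
      have h2 : 0 < m := Nat.pos_of_ne_zero hm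
      positivity
    have hpos : 0 < frobNorm E := by
      unfold frobNorm
      rw [hEE]
      exact Real.sqrt_pos.2 hnm
    have h := hlip E 0
    rw [sub_zero] at h
    have h2 : Lf * frobNorm E < 0 := mul_neg_of_neg_of_pos hLf hpos
    linarith [frobNorm_nonneg (f' E - f' 0)]
  -- tau bounds for the two blocks
  have hb1 : ∀ W : Matrix (Fin n) (Fin r) ℝ,
      Lf * frobInner (W * Vkᵀ) (W * Vkᵀ) ≤ τ1 * frobInner W W := by
    intro W
    rcases le_or_gt 0 Lf with hLf | hLf
    · calc Lf * frobInner (W * Vkᵀ) (W * Vkᵀ)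
          ≤ Lf * (specNorm Vk ^ 2 * frobInner W W) :=
            mul_le_mul_of_nonneg_left (spec_bound_right W Vk) hLf
        _ = τ1 * frobInner W W := by rw [hτ1]; ring
    · rcases hdeg hLf with h0 | h0
      · subst h0
        simp [frobInner]
      · subst h0
        rw [hτ1, specNorm_zero_rows]
        simp [frobInner]
  have hb2 : ∀ W : Matrix (Fin m) (Fin r) ℝ,
      Lf * frobInner (Uk1 * Wᵀ) (Uk1 * Wᵀ) ≤ τ2 * frobInner W W := by
    intro W
    rcases le_or_gt 0 Lf with hLf | hLf
    · calc Lf * frobInner (Uk1 * Wᵀ) (Uk1 * Wᵀ)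
          ≤ Lf * (specNorm Uk1 ^ 2 * frobInner W W) :=
            mul_le_mul_of_nonneg_left (spec_bound_left Uk1 W) hLf
        _ = τ2 * frobInner W W := by rw [hτ2]; ring
    · rcases hdeg hLf with h0 | h0
      · subst h0
        rw [hτ2, specNorm_zero_rows]
        simp [frobInner]
      · subst h0
        simp [frobInner]
  -- descent inequalities for the U block
  have hdU : ∀ U : Matrix (Fin n) (Fin r) ℝ,
      |f (U * Vkᵀ) - f (Utk * Vkᵀ) - frobInner (f' (Utk * Vkᵀ) * Vk) (U - Utk)|
        ≤ τ1 / 2 * frobInner (U - Utk) (U - Utk) := by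
    intro U
    have hd := descent_abs f f' Lf hdiff hgrad hlip (Utk * Vkᵀ) ((U - Utk) * Vkᵀ)
    have hXW : Utk * Vkᵀ + (U - Utk) * Vkᵀ = U * Vkᵀ := by
      have h0 : Utk + (U - Utk) = U := by abel
      rw [← Matrix.add_mul, h0]
    rw [hXW, adj_right] at hd
    have hb := hb1 (U - Utk)
    linarith [hd, hb, abs_nonneg (f (U * Vkᵀ) - f (Utk * Vkᵀ)
      - frobInner (f' (Utk * Vkᵀ) * Vk) (U - Utk))]
  -- descent inequalities for the V block
  have hdV : ∀ V : Matrix (Fin m) (Fin r) ℝ,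
      |f (Uk1 * Vᵀ) - f (Uk1 * Vtkᵀ) - frobInner ((f' (Uk1 * Vtkᵀ))ᵀ * Uk1) (V - Vtk)|
        ≤ τ2 / 2 * frobInner (V - Vtk) (V - Vtk) := by
    intro V
    have hd := descent_abs f f' Lf hdiff hgrad hlip (Uk1 * Vtkᵀ) (Uk1 * (V - Vtk)ᵀ)
    have hXW : Uk1 * Vtkᵀ + Uk1 * (V - Vtk)ᵀ = Uk1 * Vᵀ := by
      have h0 : Vtk + (V - Vtk) = V := by abel
      rw [← Matrix.mul_add, ← Matrix.transpose_add, h0]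
    rw [hXW, adj_left] at hd
    have hb := hb2 (V - Vtk)
    linarith [hd, hb]
  -- U block inequality
  have SU : f (Uk1 * Vkᵀ) + (mu / 2 * frobInner Uk1 Uk1 + lam * (l20 Uk1 : ℝ))
      + ρ1 * α1 / 2 * frobInner (Uk1 - Uk) (Uk1 - Uk)
      ≤ f (Uk * Vkᵀ) + (mu / 2 * frobInner Uk Uk + lam * (l20 Uk : ℝ))
      + (2 * (1 - ρ1) * τ1 + α1) * βk ^ 2 / (2 * (1 - ρ1))
        * frobInner (Uk - Ukm) (Uk - Ukm) := by
    have hA1 := (abs_le.1 (hdU Uk1)).2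
    have hA2 := (abs_le.1 (hdU Uk)).1
    rw [frobInner_sub_right (f' (Utk * Vkᵀ) * Vk)] at hA1 hA2
    exact scalar_step τ1 γ1 α1 ρ1 βk hγ1 hα1 hρ1 hβk
      (f (Uk1 * Vkᵀ)) (f (Uk * Vkᵀ)) (f (Utk * Vkᵀ))
      (frobInner (f' (Utk * Vkᵀ) * Vk) Uk1) (frobInner (f' (Utk * Vkᵀ) * Vk) Uk)
      (frobInner (f' (Utk * Vkᵀ) * Vk) Utk)
      (mu / 2 * frobInner Uk1 Uk1 + lam * (l20 Uk1 : ℝ))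
      (mu / 2 * frobInner Uk Uk + lam * (l20 Uk : ℝ))
      (frobInner (Uk1 - Utk) (Uk1 - Utk)) (frobInner (Uk - Utk) (Uk - Utk))
      (frobInner (Uk1 - Uk) (Uk1 - Uk)) (frobInner (Uk - Ukm) (Uk - Ukm))
      (by linarith [hA1]) (by linarith [hA2]) (by linarith [hU Uk])
      (extrap_sq0 βk Ukm Uk Utk hUt)
      (extrap_sq ρ1 βk hρ1 hβk Ukm Uk Uk1 Utk hUt)
  -- V block inequality
  have SV : f (Uk1 * Vk1ᵀ) + (mu / 2 * frobInner Vk1 Vk1 + lam * (l20 Vk1 : ℝ))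
      + ρ2 * α2 / 2 * frobInner (Vk1 - Vk) (Vk1 - Vk)
      ≤ f (Uk1 * Vkᵀ) + (mu / 2 * frobInner Vk Vk + lam * (l20 Vk : ℝ))
      + (2 * (1 - ρ2) * τ2 + α2) * βk ^ 2 / (2 * (1 - ρ2))
        * frobInner (Vk - Vkm) (Vk - Vkm) := by
    have hA1 := (abs_le.1 (hdV Vk1)).2
    have hA2 := (abs_le.1 (hdV Vk)).1
    rw [frobInner_sub_right ((f' (Uk1 * Vtkᵀ))ᵀ * Uk1)] at hA1 hA2
    exact scalar_step τ2 γ2 α2 ρ2 βk hγ2 hα2 hρ2 hβk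
      (f (Uk1 * Vk1ᵀ)) (f (Uk1 * Vkᵀ)) (f (Uk1 * Vtkᵀ))
      (frobInner ((f' (Uk1 * Vtkᵀ))ᵀ * Uk1) Vk1) (frobInner ((f' (Uk1 * Vtkᵀ))ᵀ * Uk1) Vk)
      (frobInner ((f' (Uk1 * Vtkᵀ))ᵀ * Uk1) Vtk)
      (mu / 2 * frobInner Vk1 Vk1 + lam * (l20 Vk1 : ℝ))
      (mu / 2 * frobInner Vk Vk + lam * (l20 Vk : ℝ))
      (frobInner (Vk1 - Vtk) (Vk1 - Vtk)) (frobInner (Vk - Vtk) (Vk - Vtk))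
      (frobInner (Vk1 - Vk) (Vk1 - Vk)) (frobInner (Vk - Vkm) (Vk - Vkm))
      (by linarith [hA1]) (by linarith [hA2]) (by linarith [hV Vk])
      (extrap_sq0 βk Vkm Vk Vtk hVt)
      (extrap_sq ρ2 βk hρ2 hβk Vkm Vk Vk1 Vtk hVt)
  unfold Phi
  linarith [SU, SV]
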